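/- arXiv:2106.01763 — 7 statements merged into one kernel-verified Lean document; each statement's English description precedes it below -/
import Mathlib

section
/- Let Σ be a finite alphabet, j ≥ 1, and T a string over Σ of length n. The number of fragments of T that are minimal order-j fragments is at most n; formally, the set of pairs (a, b) with 0 ≤ a ≤ b < n such that the fragment of T occupying positions a through b (Lean: (T.drop a).take (b − a + 1)) is a minimal order-j fragment has cardinality at most n. -/
/-- A string `V` over `α` is order-`j` complete if every string of length `j` over `α`
occurs in `V`. -/
def OrderComplete {α : Type*} (j : ℕ) (V : List α) : Prop :=
  ∀ W : List α, W.length = j → W <:+: V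

/-- `V` is a minimal order-`j` fragment if it is order-`j` complete but neither `V.dropLast`
nor `V.tail` is order-`j` complete. -/
def MinimalOrderFragment {α : Type*} (j : ℕ) (V : List α) : Prop :=
  OrderComplete j V ∧ ¬ OrderComplete j V.dropLast ∧ ¬ OrderComplete j V.tail

lemma frag_drop {α : Type*} (T : List α) {a a' b : ℕ} (h : a ≤ a') (h' : a' ≤ b) :
    ((T.drop a').take (b - a' + 1)) = ((T.drop a).take (b - a + 1)).drop (a' - a) := by
  rw [List.drop_take, List.drop_drop]
  have e1 : b - a' + 1 = b - a + 1 - (a' - a) := by omega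
  have e2 : a' = a + (a' - a) := by omega
  rw [e1, ← e2]

lemma key_ne {α : Type*} {j : ℕ} {T : List α} {a a' b : ℕ}
    (hab : a ≤ b) (h : a < a') (h' : a' ≤ b)
    (hp : MinimalOrderFragment j ((T.drop a).take (b - a + 1)))
    (hq : OrderComplete j ((T.drop a').take (b - a' + 1))) : False := by
  apply hp.2.2
  intro W hW
  have h1 : W <:+: (T.drop a').take (b - a' + 1) := hq W hW
  have h2 : ((T.drop a').take (b - a' + 1)) <:+ ((T.drop a).take (b - a + 1)).tail := by
    rw [frag_drop T (le_of_lt h) h', ← List.drop_one]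
    have e3 : List.drop (a' - a) ((T.drop a).take (b - a + 1)) =
        List.drop (a' - a - 1) (List.drop 1 ((T.drop a).take (b - a + 1))) := by
      rw [List.drop_drop]; congr 1; omega
    rw [e3]
    exact List.drop_suffix _ _
  exact h1.trans h2.isInfix

/-- A string `T` of length `n` has at most `n` fragments that are minimal
order-`j` fragments: the set of pairs `(a, b)` with `a ≤ b < n` such that the fragment of `T`
at positions `a..b` is a minimal order-`j` fragment has cardinality at most `n`. -/
theorem minimalOrderFragments_card_le {α : Type*} [Fintype α] (j : ℕ) (hj : 1 ≤ j)
    (T : List α) :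
    Set.ncard {p : ℕ × ℕ | p.1 ≤ p.2 ∧ p.2 < T.length ∧
      MinimalOrderFragment j ((T.drop p.1).take (p.2 - p.1 + 1))} ≤ T.length := by
  set S := {p : ℕ × ℕ | p.1 ≤ p.2 ∧ p.2 < T.length ∧
      MinimalOrderFragment j ((T.drop p.1).take (p.2 - p.1 + 1))}
  have hinj : Set.InjOn Prod.snd S := by
    rintro ⟨a, b⟩ hp ⟨a', b'⟩ hq (hbb : b = b')
    subst hbb
    obtain ⟨h1, h2, h3⟩ := hp
    obtain ⟨h1', h2', h3'⟩ := hq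
    rcases lt_trichotomy a a' with h | h | h
    · exact absurd (key_ne h1 h h1' h3 h3'.1) id
    · simp [h]
    · exact absurd (key_ne h1' h h1 h3' h3.1) id
  calc S.ncard = (Prod.snd '' S).ncard := (Set.ncard_image_of_injOn hinj).symm
    _ ≤ (Set.Iio T.length).ncard := by
        apply Set.ncard_le_ncard
        · rintro b ⟨⟨a, b'⟩, hp, rfl⟩
          exact hp.2.1
        · exact Set.finite_Iio _
    _ = T.length := by
        rw [← Finset.coe_range, Set.ncard_coe_finset, Finset.card_range]
end

section
/- Let V be a type, let N, t, a be natural numbers, and let A : Fin N → V be a sequence such that every element v of V satisfies A(i) = v for some index i with t ≤ i < N. Then the following are equivalent: (1) every element v of V satisfies A(k) = v for some index k with a ≤ k < t; (2) for every index i with t ≤ i < N there exists an index k with a ≤ k < i and A(k) = A(i). (This is the abstract content of the paper's Fact relating completeness of a range to the minimum of the previous-occurrence array PRE: condition (2) says that every position i ≥ t has a previous occurrence of its value at position at least a.) -/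
/-- Let `A : Fin N → V` be a sequence in which every value of `V` occurs at
some index in `[t, N)`. Then every value of `V` occurs at some index in `[a, t)` iff every index
`i ∈ [t, N)` has a previous occurrence of its value at an index in `[a, i)`. -/
theorem complete_range_iff_prev_occurrence {V : Type*} (N t a : ℕ) (A : Fin N → V)
    (h : ∀ v : V, ∃ i : Fin N, t ≤ (i : ℕ) ∧ A i = v) :
    (∀ v : V, ∃ k : Fin N, a ≤ (k : ℕ) ∧ (k : ℕ) < t ∧ A k = v) ↔
      (∀ i : Fin N, t ≤ (i : ℕ) →
        ∃ k : Fin N, a ≤ (k : ℕ) ∧ (k : ℕ) < (i : ℕ) ∧ A k = A i) := by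
  constructor
  · intro h1 i hi
    obtain ⟨k, hk1, hk2, hk3⟩ := h1 (A i)
    exact ⟨k, hk1, lt_of_lt_of_le hk2 hi, hk3⟩
  · intro h2 v
    obtain ⟨i, hi, hAi⟩ := h v
    subst hAi
    have key : ∀ n : ℕ, ∀ i : Fin N, (i : ℕ) ≤ n → t ≤ (i : ℕ) →
        ∃ k : Fin N, a ≤ (k : ℕ) ∧ (k : ℕ) < t ∧ A k = A i := by
      intro n
      induction n with
      | zero => intro i hi ht
                obtain ⟨k, hk1, hk2, _⟩ := h2 i ht
                omega
      | succ n ih =>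
        intro i hi ht
        obtain ⟨k, hk1, hk2, hk3⟩ := h2 i ht
        by_cases hkt : (k : ℕ) < t
        · exact ⟨k, hk1, hkt, hk3⟩
        · obtain ⟨k', h1', h2', h3'⟩ := ih k (by omega) (by omega)
          exact ⟨k', h1', h2', h3'.trans hk3⟩
    exact key i i le_rfl hi
end

section
/- Let Σ be a finite alphabet of size σ ≥ 2, let W be a nonempty string over Σ, let k be a natural number, and let S be a string over Σ. If for every string U of length k over Σ the concatenation U·W occurs in S, then 4·|S| ≥ |W|·σ^k. -/
private lemma per_gcd_aux {α : Type*} (w : ℕ → α) (m : ℕ) :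
    ∀ N a b, b ≤ N → 0 < a → a ≤ b → a + b ≤ m →
      (∀ i, i + a < m → w (i + a) = w i) →
      (∀ i, i + b < m → w (i + b) = w i) →
      ∀ i, i + Nat.gcd a b < m → w (i + Nat.gcd a b) = w i := by
  intro N
  induction N with
  | zero => intro a b hb ha hab _ _ _; omega
  | succ N ih =>
    intro a b hbN ha hab habm pa pb
    rcases eq_or_lt_of_le hab with heq | hlt
    · subst heq; simpa [Nat.gcd_self] using pa
    · have hb' : ∀ i, i + (b - a) < m → w (i + (b - a)) = w i := by
        intro i hi
        by_cases hc : i + b < m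
        · have h2 : w ((i + (b - a)) + a) = w (i + (b - a)) := pa _ (by omega)
          have e : (i + (b - a)) + a = i + b := by omega
          rw [e] at h2
          exact h2.symm.trans (pb i hc)
        · have h1 : w ((i - a) + a) = w (i - a) := pa _ (by omega)
          have h2 : w ((i - a) + b) = w (i - a) := pb _ (by omega)
          have e1 : (i - a) + a = i := by omega
          have e2 : (i - a) + b = i + (b - a) := by omega
          rw [e1] at h1; rw [e2] at h2
          exact h2.trans h1.symm
      rcases le_total a (b - a) with hle | hle
      · have hres := ih a (b - a) (by omega) ha hle (by omega) pa hb'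
        have hg : Nat.gcd a (b - a) = Nat.gcd a b := Nat.gcd_sub_self_right hab
        rwa [hg] at hres
      · have hba : 0 < b - a := by omega
        have hres := ih (b - a) a (by omega) hba hle (by omega) hb' pa
        have hg : Nat.gcd (b - a) a = Nat.gcd a b := by
          rw [Nat.gcd_comm, Nat.gcd_sub_self_right hab]
        rwa [hg] at hres

private lemma per_gcd {α : Type*} (w : ℕ → α) (m : ℕ) {a b : ℕ}
    (ha : 0 < a) (hb : 0 < b) (habm : a + b ≤ m)
    (pa : ∀ i, i + a < m → w (i + a) = w i)
    (pb : ∀ i, i + b < m → w (i + b) = w i) :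
    ∀ i, i + Nat.gcd a b < m → w (i + Nat.gcd a b) = w i := by
  rcases le_total a b with hle | hle
  · exact per_gcd_aux w m b a b le_rfl ha hle habm pa pb
  · have := per_gcd_aux w m a b a le_rfl hb hle (by omega) pb pa
    rwa [Nat.gcd_comm] at this

private lemma per_mul {α : Type*} (w : ℕ → α) (m p : ℕ) (hp : 0 < p)
    (pp : ∀ i, i + p < m → w (i + p) = w i) :
    ∀ t, 0 < t → p * t ≤ m → w (p * t - 1) = w (p - 1) := by
  intro t
  induction t with
  | zero => intro h; omega
  | succ t iht =>
    intro _ hle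
    rcases Nat.eq_zero_or_pos t with rfl | ht
    · simp
    · have hpt : 1 ≤ p * t := Nat.mul_pos hp ht
      have hmul : p * (t + 1) = p * t + p := by ring
      have e : p * (t + 1) - 1 = (p * t - 1) + p := by omega
      rw [e, pp _ (by omega)]
      exact iht ht (by omega)

/-- Over a finite alphabet of size `σ ≥ 2`, if `W` is nonempty and for every
string `U` of length `k` the concatenation `U ++ W` occurs in `S`, then `4|S| ≥ |W| · σ^k`. -/
theorem length_ge_of_all_concat_occur {α : Type*} [Fintype α] (hσ : 2 ≤ Fintype.card α)
    (W : List α) (hW : W ≠ []) (k : ℕ) (S : List α)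
    (h : ∀ U : List α, U.length = k → (U ++ W) <:+: S) :
    W.length * Fintype.card α ^ k ≤ 4 * S.length := by
  classical
  set σ := Fintype.card α with hσdef
  obtain ⟨d₀⟩ : Nonempty α := Fintype.card_pos_iff.mp (by omega)
  set m := W.length with hmdef
  have hm0 : 0 < m := List.length_pos_iff.mpr hW
  rcases Nat.eq_zero_or_pos k with rfl | hk
  · have hin : W <:+: S := by simpa using h [] rfl
    have := hin.length_le
    simp only [pow_zero, mul_one]
    omega
  -- main case : k ≥ 1
  set f : ℕ → α := fun i => S.getD i d₀ with hf
  set w : ℕ → α := fun i => W.getD i d₀ with hw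
  have exP : ∃ d, 0 < d ∧ ∀ i, i + d < m → w (i + d) = w i :=
    ⟨m, hm0, fun i hi => absurd hi (by omega)⟩
  set p := Nat.find exP with hpdef
  obtain ⟨hp0, hpper⟩ := Nat.find_spec exP
  have hpm : p ≤ m := Nat.find_min' exP ⟨hm0, fun i hi => absurd hi (by omega)⟩
  set c := w (p - 1) with hcdef
  -- the gap lemma
  have gap : ∀ q q' : ℕ, (∀ j, j < m → f (q + j) = w j) → (∀ j, j < m → f (q' + j) = w j) →
      q < q' → 2 * (q' - q) < m → f (q' - 1) = c := by
    intro q q' hq hq' hlt hsm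
    have he0 : 0 < q' - q := by omega
    have hem : q' - q < m := by omega
    have pere : ∀ i, i + (q' - q) < m → w (i + (q' - q)) = w i := by
      intro i hi
      have h1 := hq (i + (q' - q)) hi
      have h2 := hq' i (by omega)
      have e2 : q + (i + (q' - q)) = q' + i := by omega
      rw [e2] at h1
      exact h1.symm.trans h2
    have hpe : p ≤ q' - q := Nat.find_min' exP ⟨he0, pere⟩
    have perg := per_gcd w m hp0 he0 (by omega) hpper pere
    have hgpos : 0 < Nat.gcd p (q' - q) := Nat.gcd_pos_of_pos_left _ hp0
    have hgle : Nat.gcd p (q' - q) ≤ p := Nat.gcd_le_left _ hp0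
    have hgge : p ≤ Nat.gcd p (q' - q) := Nat.find_min' exP ⟨hgpos, perg⟩
    have hgp : Nat.gcd p (q' - q) = p := by omega
    have hdvd : p ∣ (q' - q) := hgp ▸ Nat.gcd_dvd_right p (q' - q)
    obtain ⟨t, ht⟩ := hdvd
    have ht0 : 0 < t := by
      rcases Nat.eq_zero_or_pos t with rfl | h'
      · omega
      · exact h'
    have hmul := per_mul w m p hp0 hpper t ht0 (by omega)
    have h3 := hq ((q' - q) - 1) (by omega)
    have e3 : q + ((q' - q) - 1) = q' - 1 := by omega
    rw [e3] at h3
    rw [h3, ht, hmul]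
  -- occurrences
  have getDmid : ∀ (s mid t : List α) (i : ℕ), i < mid.length →
      ((s ++ mid) ++ t).getD (s.length + i) d₀ = mid.getD i d₀ := by
    intro s mid t i hi
    rw [List.getD_append _ _ _ _ (by simp; omega),
        List.getD_append_right _ _ _ _ (by omega)]
    simp
  set I := List.Vector α (k - 1) × {a : α // a ≠ c} with hI
  set U : I → List α := fun va => va.1.toList ++ [va.2.val] with hUdef
  have hUlen : ∀ va : I, (U va).length = k := by
    intro va
    simp only [hUdef, List.length_append, List.length_singleton,
      List.Vector.toList_length]
    omega
  have h' : ∀ va : I, ∃ pre post, (pre ++ ((U va) ++ W)) ++ post = S := by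
    intro va
    obtain ⟨s, t, hst⟩ := h (U va) (hUlen va)
    exact ⟨s, t, hst⟩
  choose pre post hpre using h'
  set q : I → ℕ := fun va => (pre va).length + k with hqdef
  have hSlen : ∀ va : I, q va + m ≤ S.length := by
    intro va
    have := hpre va
    have hl : S.length = (pre va).length + ((U va).length + m) + (post va).length := by
      rw [← this]; simp; omega
    rw [hUlen va] at hl
    simp only [hqdef]
    omega
  have hSgetD : ∀ va : I, ∀ i, i < k + m →
      f ((pre va).length + i) = ((U va) ++ W).getD i d₀ := by
    intro va i hi
    have hlen : i < ((U va) ++ W).length := by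
      simp [hUlen va]; omega
    have hmid := getDmid (pre va) ((U va) ++ W) (post va) i hlen
    rw [hpre va] at hmid
    exact hmid
  have occ : ∀ va : I, ∀ j, j < m → f (q va + j) = w j := by
    intro va j hj
    have e : q va + j = (pre va).length + (k + j) := by simp [hqdef]; omega
    rw [e, hSgetD va (k + j) (by omega),
        List.getD_append_right _ _ _ _ (by rw [hUlen va]; omega)]
    rw [hUlen va]
    simp [hw]
  have prev : ∀ va : I, f (q va - 1) = va.2.val := by
    intro va
    have e : q va - 1 = (pre va).length + (k - 1) := by simp [hqdef]; omega
    rw [e, hSgetD va (k - 1) (by omega),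
        List.getD_append _ _ _ _ (by rw [hUlen va]; omega)]
    have hvl : va.1.toList.length = k - 1 := List.Vector.toList_length _
    simp only [hUdef]
    rw [List.getD_append_right _ _ _ _ (by omega), hvl]
    simp
  have recov : ∀ va va' : I, q va = q va' → va = va' := by
    intro va va' hqq
    have hplen : (pre va).length = (pre va').length := by
      simp only [hqdef] at hqq; omega
    have hUU : U va = U va' := by
      apply List.ext_getElem (by rw [hUlen va, hUlen va'])
      intro n hn1 hn2
      have hnk : n < k := by have := hn1; rwa [hUlen va] at this
      have g1 := hSgetD va n (by omega)
      have g2 := hSgetD va' n (by omega)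
      rw [hplen] at g1
      have r1 := List.getD_append (U va) W d₀ n (by rw [hUlen va]; omega)
      have r2 := List.getD_append (U va') W d₀ n (by rw [hUlen va']; omega)
      have key : (U va).getD n d₀ = (U va').getD n d₀ :=
        r1.symm.trans (g1.symm.trans (g2.trans r2))
      exact ((List.getD_eq_getElem (U va) d₀ hn1).symm.trans key).trans
        (List.getD_eq_getElem (U va') d₀ hn2)
    simp only [hUdef] at hUU
    obtain ⟨h1, h2⟩ := List.append_inj hUU
      (by rw [List.Vector.toList_length, List.Vector.toList_length])
    have hv : va.1 = va'.1 := List.Vector.toList_injective h1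
    have ha : va.2 = va'.2 := Subtype.ext (by simpa using h2)
    exact Prod.ext hv ha
  -- packing
  set g : ℕ := (m + 1) / 2 with hgdef
  have hg0 : 0 < g := by omega
  have hgap2 : ∀ va va' : I, va ≠ va' → q va < q va' → m ≤ 2 * (q va' - q va) := by
    intro va va' hne hlt
    by_contra hcon
    have := gap (q va) (q va') (occ va) (occ va') hlt (by omega)
    rw [prev va'] at this
    exact va'.2.2 this
  have hinj : Set.InjOn (fun va : I => q va / g) ↑(Finset.univ : Finset I) := by
    intro va _ va' _ heq
    by_contra hne
    have hqq : q va ≠ q va' := fun hq => hne (recov _ _ hq)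
    simp only at heq
    -- wlog q va < q va'
    have key : ∀ x y : I, q x < q y → q x / g = q y / g → x ≠ y → False := by
      intro x y hlt heq hnexy
      have hgapm := hgap2 x y hnexy hlt
      have hd : g ≤ q y - q x := by omega
      have h2 : (q x / g + 1) * g ≤ q y := by
        have h1 := Nat.div_mul_le_self (q x) g
        have hxg : q x + g ≤ q y := by omega
        calc (q x / g + 1) * g = q x / g * g + g := by ring
          _ ≤ q x + g := by omega
          _ ≤ q y := hxg
      have := (Nat.le_div_iff_mul_le hg0).mpr h2
      omega
    rcases lt_or_gt_of_ne hqq with hlt | hlt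
    · exact key va va' hlt heq hne
    · exact key va' va hlt heq.symm (Ne.symm hne)
  have hmem : ∀ va : I, va ∈ (Finset.univ : Finset I) →
      q va / g ∈ Finset.range ((S.length - m) / g + 1) := by
    intro va _
    rw [Finset.mem_range]
    have h1 := hSlen va
    have : q va ≤ S.length - m := by omega
    have := Nat.div_le_div_right (c := g) this
    omega
  have hcard := Finset.card_le_card_of_injOn _ hmem hinj
  rw [Finset.card_range, Finset.card_univ] at hcard
  have hcardI : Fintype.card I = σ ^ (k - 1) * (σ - 1) := by
    have h1 : Fintype.card I =
        Fintype.card (List.Vector α (k - 1)) * Fintype.card {a : α // a ≠ c} :=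
      Fintype.card_prod _ _
    rw [h1, card_vector]
    congr 1
    have := Fintype.card_subtype_compl (fun a : α => a = c)
    rw [Fintype.card_subtype_eq] at this
    exact this
  rw [hcardI] at hcard
  -- final arithmetic
  set N := σ ^ (k - 1) * (σ - 1) with hN
  have hN1 : 1 ≤ N := by
    have h1 : 1 ≤ σ ^ (k - 1) := Nat.one_le_pow _ _ (by omega)
    have h2 : 1 ≤ σ - 1 := by omega
    calc 1 = 1 * 1 := by ring
      _ ≤ σ ^ (k - 1) * (σ - 1) := Nat.mul_le_mul h1 h2
  have hmS : m ≤ S.length := by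
    obtain ⟨b, hb⟩ := Fintype.exists_ne_of_one_lt_card (by omega) c
    have := hSlen (List.Vector.replicate (k - 1) d₀, ⟨b, hb⟩)
    omega
  have h1 : (N - 1) * g ≤ S.length - m := (Nat.le_div_iff_mul_le hg0).mp (by omega)
  have e3 : σ ^ k ≤ 2 * N := by
    have e2 : σ ^ k = σ ^ (k - 1) * σ := by
      rw [← pow_succ]
      congr 1
      omega
    calc σ ^ k = σ ^ (k - 1) * σ := e2
      _ ≤ σ ^ (k - 1) * (2 * (σ - 1)) := Nat.mul_le_mul_left _ (by omega)
      _ = 2 * N := by rw [hN]; ring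
  have e4 : (N - 1) * m ≤ 2 * ((N - 1) * g) := by
    calc (N - 1) * m ≤ (N - 1) * (2 * g) := Nat.mul_le_mul_left _ (by omega)
      _ = 2 * ((N - 1) * g) := by ring
  have e5 : (N - 1) * m + m = N * m := by
    have hN' : N - 1 + 1 = N := by omega
    calc (N - 1) * m + m = (N - 1 + 1) * m := by ring
      _ = N * m := by rw [hN']
  have e6 : m * σ ^ k ≤ 2 * (N * m) := by
    calc m * σ ^ k ≤ m * (2 * N) := Nat.mul_le_mul_left _ e3
      _ = 2 * (N * m) := by ring
  omega
end

section
/- Let Σ be an alphabet, let W be a nonempty string over Σ with smallest period p, and let a ∈ Σ be a letter such that the smallest period of a·W (the string W with the letter a prepended) is also p. Let k ≥ 1 and let U and V be strings of length k over Σ such that the last letter of U is not a, the last letter of V is not a, and U ≠ V. If U·W occurs in a string S at position i (i.e., U·W is a prefix of the suffix of S starting at index i) and V·W occurs in S at position j, then 2·|i − j| ≥ |W|. -/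
/-- `p` is a period of the string `S` if `p > 0` and `S[i] = S[i + p]` for all valid `i`. -/
def IsPeriod {α : Type*} (p : ℕ) (S : List α) : Prop :=
  0 < p ∧ ∀ (i : ℕ) (h : i + p < S.length), S.get ⟨i, by omega⟩ = S.get ⟨i + p, h⟩

lemma isPeriod_iff {α : Type*} (p : ℕ) (S : List α) :
    IsPeriod p S ↔ 0 < p ∧ ∀ (i : ℕ) (h : i + p < S.length),
      S[i]'(by omega) = S[i+p]'h := by
  simp [IsPeriod]

lemma isPeriod_length {α : Type*} (S : List α) (h : S ≠ []) : IsPeriod S.length S :=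
  ⟨List.length_pos_iff.mpr h, fun i hi => by omega⟩

/-- getElem congruence in the index. -/
lemma gcong {α : Type*} (l : List α) {i j : ℕ} (h : i = j) {hi : i < l.length} :
    l[i]'hi = l[j]'(h ▸ hi) := by subst h; rfl

/-- Subtraction step for Fine–Wilf. -/
lemma period_sub {α : Type*} {W : List α} {p d : ℕ} (hp : IsPeriod p W) (hd : IsPeriod d W)
    (hlt : p < d) (hsum : p + d ≤ W.length) : IsPeriod (d - p) W := by
  rw [isPeriod_iff] at hp hd ⊢
  refine ⟨by omega, fun t ht => ?_⟩
  by_cases hcase : t + d < W.length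
  · have h1 := hd.2 t hcase
    have h2 := hp.2 (t + (d - p)) (by omega)
    calc W[t]'(by omega) = W[t + d]'hcase := h1
      _ = W[t + (d - p) + p]'(by omega) := gcong W (by omega)
      _ = W[t + (d - p)]'ht := h2.symm
  · have htp : p ≤ t := by omega
    have h1 := hp.2 (t - p) (by omega)
    have h2 := hd.2 (t - p) (by omega)
    calc W[t]'(by omega) = W[t - p + p]'(by omega) := gcong W (by omega)
      _ = W[t - p]'(by omega) := h1.symm
      _ = W[t - p + d]'(by omega) := h2
      _ = W[t + (d - p)]'ht := gcong W (by omega)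

/-- If `p` is the smallest period and `d` a period with `p + d ≤ |W|`, then `p ∣ d`. -/
lemma period_dvd {α : Type*} {W : List α} {p : ℕ}
    (hmin : ∀ q, IsPeriod q W → p ≤ q) (hpW : IsPeriod p W) :
    ∀ d, IsPeriod d W → p + d ≤ W.length → p ∣ d := by
  intro d
  induction d using Nat.strong_induction_on with
  | _ d ih =>
    intro hd hsum
    have hp0 : 0 < p := hpW.1
    have hpd : p ≤ d := hmin d hd
    rcases eq_or_lt_of_le hpd with heq | hlt
    · exact heq ▸ dvd_refl p
    · have hsub := period_sub hpW hd hlt hsum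
      have h1 : p ≤ d - p := hmin _ hsub
      have hlt2 : d - p < d := by omega
      have hsum2 : p + (d - p) ≤ W.length := by omega
      have h2 : p ∣ (d - p) := ih (d - p) hlt2 hsub hsum2
      have : d = (d - p) + p := by omega
      rw [this]; exact Nat.dvd_add h2 (dvd_refl p)

lemma getElem_multiple {α : Type*} {W : List α} {p : ℕ} (hp : IsPeriod p W) :
    ∀ m (hm : 1 ≤ m) (hle : p * m ≤ W.length),
      W[p * m - 1]'(by have := hp.1; have := Nat.le_mul_of_pos_right p hm; omega) =
        W[p - 1]'(by have := hp.1; have := Nat.le_mul_of_pos_right p hm; omega) := by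
  have hp1 := hp.1
  rw [isPeriod_iff] at hp
  intro m
  induction m with
  | zero => omega
  | succ m ih =>
    intro _ hle
    rcases Nat.eq_zero_or_pos m with hm | hm
    · subst hm; simp
    · have hmul : p * (m + 1) = p * m + p := by ring
      have hpm1 : 1 ≤ p * m := Nat.one_le_iff_ne_zero.mpr (by positivity)
      have key := hp.2 (p * m - 1) (by omega)
      calc W[p * (m+1) - 1]'(by omega) = W[p * m - 1 + p]'(by omega) := gcong W (by omega)
        _ = W[p * m - 1]'(by omega) := key.symm
        _ = W[p - 1]'(by omega) := ih hm (by omega)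

lemma prefix_getElem {α : Type*} {A S : List α} {m : ℕ} (h : A <+: S.drop m) {t : ℕ}
    (ht : t < A.length) :
    ∃ hs : m + t < S.length, S[m + t] = A[t] := by
  have hlen := h.length_le
  rw [List.length_drop] at hlen
  have hs : m + t < S.length := by omega
  refine ⟨hs, ?_⟩
  have h2 := h.getElem ht
  rw [List.getElem_drop] at h2
  exact h2.symm

/-- Main combinatorial core: if `W` occurs at position `m` in `S` and `b :: W` occurs at
position `m + d - 1` (with `d ≥ 1`), `b ≠ a`, and the overlap is large, contradiction. -/
lemma occ_core {α : Type*} (W : List α) (hW : W ≠ []) (p : ℕ)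
    (hp : p = sInf {q | IsPeriod q W}) (a : α)
    (ha : sInf {q | IsPeriod q (a :: W)} = p)
    (S : List α) (m d : ℕ) (hd : 1 ≤ d) (h2d : 2 * d < W.length)
    (b : α) (hb : b ≠ a)
    (h1 : W <+: S.drop m) (h2 : (b :: W) <+: S.drop (m + d - 1)) : False := by
  have hne : {q | IsPeriod q W}.Nonempty := ⟨W.length, isPeriod_length W hW⟩
  have hpW : IsPeriod p W := hp ▸ Nat.sInf_mem hne
  have hmin : ∀ q, IsPeriod q W → p ≤ q := fun q hq => hp ▸ Nat.sInf_le hq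
  have hneA : {q | IsPeriod q (a :: W)}.Nonempty :=
    ⟨(a :: W).length, isPeriod_length _ (by simp)⟩
  have hpaW : IsPeriod p (a :: W) := ha ▸ Nat.sInf_mem hneA
  have hp1 : 0 < p := hpW.1
  have hpleW : p ≤ W.length := hmin _ (isPeriod_length W hW)
  rw [isPeriod_iff] at hpaW
  -- a = W[p-1]
  have haW : a = W[p - 1]'(by omega) := by
    have := hpaW.2 0 (by simp; omega)
    simpa [List.getElem_cons, show ¬ p = 0 from by omega] using this
  -- indices from occurrence 2 : S[m+d+t] = W[t]
  have occ2 : ∀ t (ht : t < W.length), ∃ hs : m + d + t < S.length, S[m + d + t] = W[t] := by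
    intro t ht
    obtain ⟨hs, he⟩ := prefix_getElem h2 (t := t + 1) (by simp; omega)
    refine ⟨by omega, ?_⟩
    calc S[m + d + t]'(by omega) = S[m + d - 1 + (t + 1)]'hs := gcong S (by omega)
      _ = (b :: W)[t + 1]'(by simp; omega) := he
      _ = W[t] := by simp
  -- d is a period of W
  have hdW : IsPeriod d W := by
    rw [isPeriod_iff]
    refine ⟨by omega, fun t ht => ?_⟩
    obtain ⟨hs1, he1⟩ := prefix_getElem h1 (t := t + d) ht
    obtain ⟨hs2, he2⟩ := occ2 t (by omega)
    calc W[t]'(by omega) = S[m + d + t]'hs2 := he2.symm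
      _ = S[m + (t + d)]'(by omega) := gcong S (by omega)
      _ = W[t + d]'ht := he1
  have hpd : p ≤ d := hmin d hdW
  have hdvd : p ∣ d := period_dvd hmin hpW d hdW (by omega)
  obtain ⟨c, hc⟩ := hdvd
  have hc1 : 1 ≤ c := by
    rcases Nat.eq_zero_or_pos c with h | h
    · subst h; omega
    · exact h
  -- W[d-1] = W[p-1] = a
  have hWd : W[d - 1]'(by omega) = W[p - 1]'(by omega) := by
    have := getElem_multiple hpW c hc1 (by omega)
    calc W[d - 1]'(by omega) = W[p * c - 1]'(by omega) := gcong W (by omega)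
      _ = W[p - 1]'(by omega) := this
  -- b = S[m+d-1] = W[d-1]
  obtain ⟨hs0, he0⟩ := prefix_getElem h2 (t := 0) (by simp)
  obtain ⟨hs1, he1⟩ := prefix_getElem h1 (t := d - 1) (by omega)
  apply hb
  calc b = (b :: W)[0] := rfl
    _ = S[m + d - 1 + 0]'hs0 := he0.symm
    _ = S[m + (d - 1)]'(by omega) := gcong S (by omega)
    _ = W[d - 1]'(by omega) := he1
    _ = W[p - 1]'(by omega) := hWd
    _ = a := haW.symm

/-- Positioned version: `U ++ W` at `i`, `V ++ W` at `i + d`, `d ≥ 1`. -/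
lemma occ_aux {α : Type*} (W : List α) (hW : W ≠ []) (p : ℕ)
    (hp : p = sInf {q | IsPeriod q W}) (a : α)
    (ha : sInf {q | IsPeriod q (a :: W)} = p)
    (k : ℕ) (hk : 1 ≤ k) (U V : List α)
    (hU : U.length = k) (hV : V.length = k) (hVa : V.getLast? ≠ some a)
    (S : List α) (i d : ℕ) (hd : 1 ≤ d)
    (hi : (U ++ W) <+: S.drop i) (hj : (V ++ W) <+: S.drop (i + d)) :
    W.length ≤ 2 * d := by
  by_contra hcon
  push_neg at hcon
  have hVne : V ≠ [] := by intro h; rw [h] at hV; simp at hV; omega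
  have hb : V.getLast hVne ≠ a := by
    intro h
    exact hVa (by rw [List.getLast?_eq_getLast hVne, h])
  -- W occurs at i + k
  have h1 : W <+: S.drop (i + k) := by
    obtain ⟨t, ht⟩ := hi
    refine ⟨t, ?_⟩
    have hdd : S.drop (i + k) = (S.drop i).drop k := by rw [List.drop_drop]
    rw [hdd, ← ht, List.append_assoc]
    conv_rhs => rw [← hU]
    exact (List.drop_left (l₁ := U) (l₂ := W ++ t)).symm
  -- (V.getLast) :: W occurs at (i + k) + d - 1 = i + d + (k - 1)
  have h2 : ((V.getLast hVne) :: W) <+: S.drop (i + k + d - 1) := by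
    obtain ⟨t, ht⟩ := hj
    refine ⟨t, ?_⟩
    have hsplit : V ++ W = V.dropLast ++ ((V.getLast hVne) :: W) := by
      conv_lhs => rw [← List.dropLast_append_getLast hVne]
      rw [List.append_assoc]; rfl
    have hdl : V.dropLast.length = k - 1 := by rw [List.length_dropLast, hV]
    have hdd : S.drop (i + k + d - 1) = (S.drop (i + d)).drop (k - 1) := by
      rw [List.drop_drop]; congr 1; omega
    rw [hdd, ← ht, hsplit, List.append_assoc]
    conv_rhs => rw [← hdl]
    exact (List.drop_left (l₁ := V.dropLast) (l₂ := V.getLast hVne :: W ++ t)).symm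
  exact occ_core W hW p hp a ha S (i + k) d hd hcon (V.getLast hVne) hb h1 h2

/-- Let `W` be nonempty with smallest period `p`, and let `a` be a letter such
that `a :: W` also has smallest period `p`. If `U` and `V` are distinct strings of length
`k ≥ 1` neither of which ends with `a`, and `U ++ W` occurs at position `i` in `S` while
`V ++ W` occurs at position `j` in `S`, then `2·|i − j| ≥ |W|`. -/
theorem occ_positions_far_apart {α : Type*} (W : List α) (hW : W ≠ []) (p : ℕ)
    (hp : p = sInf {q | IsPeriod q W}) (a : α)
    (ha : sInf {q | IsPeriod q (a :: W)} = p)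
    (k : ℕ) (hk : 1 ≤ k) (U V : List α)
    (hU : U.length = k) (hV : V.length = k)
    (hUa : U.getLast? ≠ some a) (hVa : V.getLast? ≠ some a) (hUV : U ≠ V)
    (S : List α) (i j : ℕ)
    (hi : (U ++ W) <+: S.drop i) (hj : (V ++ W) <+: S.drop j) :
    W.length ≤ 2 * ((i : ℤ) - (j : ℤ)).natAbs := by
  rcases Nat.lt_trichotomy i j with hij | hij | hij
  · have := occ_aux W hW p hp a ha k hk U V hU hV hVa S i (j - i) (by omega) hi
      (by rw [show i + (j - i) = j from by omega]; exact hj)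
    omega
  · -- i = j: then U = V, contradiction
    exfalso
    subst hij
    have hlen : (U ++ W).length = (V ++ W).length := by simp [hU, hV]
    have hpre : (U ++ W) <+: (V ++ W) :=
      List.prefix_of_prefix_length_le hi hj (le_of_eq hlen)
    exact hUV (List.append_cancel_right (hpre.eq_of_length hlen))
  · have := occ_aux W hW p hp a ha k hk V U hV hU hUa S j (i - j) (by omega) hj
      (by rw [show j + (i - j) = i from by omega]; exact hi)
    omega
end

section
/- Let X, Y, P, W be strings over an alphabet Σ such that W is a suffix of P and W does not occur in X. If P occurs in X·Y, then P occurs in D·Y, where D is the suffix of X of length min(|X|, |P| − 1) (Lean: P <:+: X.drop (X.length − (P.length − 1)) ++ Y). -/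
/-- If `W` is a suffix of `P` that is absent from `X`, and `P` occurs in
`X ++ Y`, then `P` occurs in `D ++ Y` where `D` is the suffix of `X` of length
`min (|X|) (|P| - 1)`. -/
theorem infix_of_append_of_suffix_absent {α : Type*} (X Y P W : List α)
    (hWP : W <:+ P) (hWX : ¬ W <:+: X) (h : P <:+: X ++ Y) :
    P <:+: X.drop (X.length - (P.length - 1)) ++ Y := by
  obtain ⟨s, t, hst⟩ := h
  have hPne : P ≠ [] := by
    rintro rfl
    rw [List.suffix_nil.mp hWP] at hWX
    exact hWX (List.nil_infix)
  have hPlen : 1 ≤ P.length := List.length_pos_iff.mpr hPne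
  have hbig : X.length < s.length + P.length := by
    by_contra hle
    push_neg at hle
    apply hWX
    refine hWP.isInfix.trans ⟨s, t.take (X.length - s.length - P.length), ?_⟩
    have hX : (s ++ P ++ t).take X.length = X := by
      rw [hst]; exact List.take_left
    rw [List.take_append, List.take_append] at hX
    rw [List.take_of_length_le (by omega), List.take_of_length_le (by omega)] at hX
    simpa [List.length_append, Nat.sub_sub] using hX
  set d := X.length - (P.length - 1) with hd
  have hdX : d ≤ X.length := Nat.sub_le _ _
  have hds : d ≤ s.length := by omega
  refine ⟨s.drop d, t, ?_⟩
  have h1 : (s ++ P ++ t).drop d = s.drop d ++ P ++ t := by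
    rw [List.append_assoc, List.drop_append,
      Nat.sub_eq_zero_of_le hds, List.drop_zero, List.append_assoc]
  have h2 : (X ++ Y).drop d = X.drop d ++ Y := by
    rw [List.drop_append, Nat.sub_eq_zero_of_le hdX, List.drop_zero]
  rw [h1.symm, hst, h2]
end

section
/- Let Σ be a finite alphabet of size σ ≥ 2 and let X and Y be strings over Σ. Let λ = ℓ(X) be the length of a shortest absent word of X and let m = ℓ(X·Y) be the length of a shortest absent word of X·Y. Then λ ≤ m and, as real numbers, m ≤ λ + max(10, 4 + log_σ(|Y| / λ)), where log_σ denotes the real logarithm to base σ (Lean: Real.logb σ). -/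
namespace SAW

variable {α : Type*}

/-- `p` is a (weak) period of `W`, phrased with `getD` and default `a`. -/
def SmallPer (a : α) (W : List α) (p : ℕ) : Prop :=
  ∀ i, i + p < W.length → W.getD i a = W.getD (i + p) a

lemma fw_aux (a : α) (W : List α) :
    ∀ n p q, p + q ≤ n → 0 < p → 0 < q → p + q ≤ W.length →
      SmallPer a W p → SmallPer a W q → SmallPer a W (Nat.gcd p q) := by
  intro n
  induction n with
  | zero => intro p q h hp; omega
  | succ n ih =>
    intro p q hn hp hq hlen hP hQ
    rcases lt_trichotomy p q with h | h | h
    · have hsub : SmallPer a W (q - p) := by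
        intro i hi
        by_cases hiq : i + q < W.length
        · have e1 := hQ i hiq
          have e2 := hP (i + (q - p)) (by omega)
          rw [e1, e2]; congr 1; omega
        · have e1 := hP (i - p) (by omega)
          have e2 := hQ (i - p) (by omega)
          have e1' : W.getD (i - p) a = W.getD i a := by
            rw [e1]; congr 1; omega
          have e2' : W.getD (i - p) a = W.getD (i + (q - p)) a := by
            rw [e2]; congr 1; omega
          rw [← e1', e2']
      have hg : Nat.gcd p (q - p) = Nat.gcd p q := by
        rw [Nat.gcd_comm p (q - p), Nat.gcd_sub_self_left (by omega), Nat.gcd_comm]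
      rw [← hg]
      exact ih p (q - p) (by omega) hp (by omega) (by omega) hP hsub
    · subst h
      rw [Nat.gcd_self]; exact hP
    · have hsub : SmallPer a W (p - q) := by
        intro i hi
        by_cases hiq : i + p < W.length
        · have e1 := hP i hiq
          have e2 := hQ (i + (p - q)) (by omega)
          rw [e1, e2]; congr 1; omega
        · have e1 := hQ (i - q) (by omega)
          have e2 := hP (i - q) (by omega)
          have e1' : W.getD (i - q) a = W.getD i a := by
            rw [e1]; congr 1; omega
          have e2' : W.getD (i - q) a = W.getD (i + (p - q)) a := by
            rw [e2]; congr 1; omega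
          rw [← e1', e2']
      have hg : Nat.gcd (p - q) q = Nat.gcd p q := Nat.gcd_sub_self_left (by omega)
      rw [← hg]
      exact ih (p - q) q (by omega) (by omega) hq (by omega) hsub hQ

/-- stepping by multiples of a period -/
lemma step_per (a : α) (W : List α) (g : ℕ) (hg : 0 < g) (hP : SmallPer a W g) :
    ∀ k i, i + k * g < W.length → W.getD i a = W.getD (i + k * g) a := by
  intro k
  induction k with
  | zero => intro i _; simp
  | succ k ih =>
    intro i hi
    have hk : (k + 1) * g = k * g + g := by ring
    rw [hk] at hi ⊢
    have h1 := ih i (by omega)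
    have h2 := hP (i + k * g) (by omega)
    rw [h1, h2]; congr 1; omega

/-- There is a one-letter extension of `W` with no period `≤ |W|/2`. -/
lemma exists_good_ext [Fintype α] (htwo : 2 ≤ Fintype.card α) (a : α) (W : List α) :
    ∃ c : α, ∀ d, 0 < d → 2 * d ≤ W.length → ¬ SmallPer a (W ++ [c]) d := by
  classical
  set lam := W.length with hlam
  -- restriction lemma
  have hres : ∀ (c : α) d, 0 < d → 2 * d ≤ lam → SmallPer a (W ++ [c]) d →
      SmallPer a W d := by
    intro c d hd hd2 hper i hi
    have h := hper i (by simp; omega)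
    rwa [List.getD_append _ _ _ _ (by omega), List.getD_append _ _ _ _ (by omega)] at h
  have hlast : ∀ (c : α) d, 0 < d → 2 * d ≤ lam → SmallPer a (W ++ [c]) d →
      c = W.getD (lam - d) a := by
    intro c d hd hd2 hper
    have h := hper (lam - d) (by simp; omega)
    have h1 : (W ++ [c]).getD (lam - d) a = W.getD (lam - d) a :=
      List.getD_append _ _ _ _ (by omega)
    have h2 : (W ++ [c]).getD (lam - d + d) a = c := by
      have : lam - d + d = lam := by omega
      rw [this, List.getD_append_right _ _ _ _ (by omega)]
      simp [hlam]
    rw [h1, h2] at h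
    exact h.symm
  by_cases hQ : ∃ p, 0 < p ∧ 2 * p ≤ lam ∧ SmallPer a W p
  · set p₀ := Nat.find hQ with hp₀def
    obtain ⟨hp₀pos, hp₀2, hp₀per⟩ := Nat.find_spec hQ
    obtain ⟨c, hc⟩ := Fintype.exists_ne_of_one_lt_card (by omega) (W.getD (lam - p₀) a)
    refine ⟨c, fun d hd hd2 hper => ?_⟩
    have hWd : SmallPer a W d := hres c d hd hd2 hper
    have hle : p₀ ≤ d := Nat.find_min' hQ ⟨hd, hd2, hWd⟩
    have hcd : c = W.getD (lam - d) a := hlast c d hd hd2 hper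
    have heq : W.getD (lam - d) a = W.getD (lam - p₀) a := by
      rcases eq_or_lt_of_le hle with h | h
      · rw [h]
      · set g := Nat.gcd p₀ d with hg
        have hgper : SmallPer a W g :=
          fw_aux a W (p₀ + d) p₀ d le_rfl hp₀pos hd (by omega) hp₀per hWd
        have hgpos : 0 < g := Nat.gcd_pos_of_pos_left _ hp₀pos
        have hdvd : g ∣ (d - p₀) := Nat.dvd_sub (Nat.gcd_dvd_right _ _) (Nat.gcd_dvd_left _ _)
        obtain ⟨k, hk⟩ := hdvd
        have := step_per a W g hgpos hgper k (lam - d)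
          (by rw [mul_comm] at hk; omega)
        rw [this]; congr 1; rw [mul_comm] at hk; omega
    exact hc (hcd.trans heq)
  · refine ⟨a, fun d hd hd2 hper => ?_⟩
    exact hQ ⟨d, hd, hd2, hres a d hd hd2 hper⟩

/-- read off a letter from an occurrence -/
lemma getD_occ (a : α) (s W t T : List α) (h : s ++ W ++ t = T) (i : ℕ) (hi : i < W.length) :
    T.getD (s.length + i) a = W.getD i a := by
  subst h
  rw [List.append_assoc, List.getD_append_right _ _ _ _ (by omega)]
  have : s.length + i - s.length = i := by omega
  rw [this, List.getD_append _ _ _ _ hi]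

/-- two occurrences at distance `d` give a period -/
lemma per_of_two_occ (a : α) (T W : List α) (s1 t1 s2 t2 : List α) (d : ℕ)
    (h1 : s1 ++ W ++ t1 = T) (h2 : s2 ++ W ++ t2 = T)
    (hd : s2.length = s1.length + d) : SmallPer a W d := by
  intro i hi
  have e1 : T.getD (s1.length + (i + d)) a = W.getD (i + d) a := getD_occ a s1 W t1 T h1 _ hi
  have e2 : T.getD (s2.length + i) a = W.getD i a := getD_occ a s2 W t2 T h2 _ (by omega)
  have : s1.length + (i + d) = s2.length + i := by omega
  rw [this, e2] at e1
  exact e1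

/-- occurrence fully inside the left part gives infix of the left part -/
lemma infix_left_of_occ (X Y s W t : List α) (h : s ++ W ++ t = X ++ Y)
    (hlen : s.length + W.length ≤ X.length) : W <:+: X := by
  have h3 : (X ++ Y).take (s ++ W).length = X.take (s ++ W).length :=
    List.take_append_of_le_length (by simpa using hlen)
  have h6 : X.take (s ++ W).length = s ++ W := by
    rw [← h3, ← h]; exact List.take_left
  have h5 : s ++ W <+: X := by
    conv_lhs => rw [← h6]
    exact List.take_prefix _ _
  exact ((List.suffix_append s W).isInfix).trans h5.isInfix

/-- same start position and same length ⇒ same factor -/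
lemma eq_of_same_occ (s1 s2 A B t1 t2 T : List α) (h1 : s1 ++ A ++ t1 = T)
    (h2 : s2 ++ B ++ t2 = T) (hs : s1.length = s2.length) (hA : A.length = B.length) :
    A = B := by
  have h : s1 ++ (A ++ t1) = s2 ++ (B ++ t2) := by
    rw [← List.append_assoc, ← List.append_assoc, h1, h2]
  obtain ⟨-, h'⟩ := List.append_inj h hs
  exact (List.append_inj h' hA).1

end SAW

open SAW in
/-- Over a finite alphabet of size `σ ≥ 2`, let `λ = ℓ(X)` and `m = ℓ(X ++ Y)`
be the lengths of shortest absent words of `X` and `X ++ Y`. Then `λ ≤ m` and, as reals,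
`m ≤ λ + max 10 (4 + log_σ(|Y| / λ))`. -/
theorem shortest_absent_word_extension {α : Type*} [Fintype α] (hσ : 2 ≤ Fintype.card α)
    (X Y : List α) :
    sInf {k | ∃ W : List α, W.length = k ∧ ¬ W <:+: X} ≤
      sInf {k | ∃ W : List α, W.length = k ∧ ¬ W <:+: (X ++ Y)} ∧
    ((sInf {k | ∃ W : List α, W.length = k ∧ ¬ W <:+: (X ++ Y)} : ℝ) ≤
      (sInf {k | ∃ W : List α, W.length = k ∧ ¬ W <:+: X} : ℝ) +
        max 10 (4 + Real.logb (Fintype.card α)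
          ((Y.length : ℝ) / (sInf {k | ∃ W : List α, W.length = k ∧ ¬ W <:+: X} : ℝ)))) := by
  classical
  obtain ⟨a⟩ : Nonempty α := Fintype.card_pos_iff.mp (by omega)
  set σ := Fintype.card α with hσdef
  set SX : Set ℕ := {k | ∃ W : List α, W.length = k ∧ ¬ W <:+: X} with hSX
  set ST : Set ℕ := {k | ∃ W : List α, W.length = k ∧ ¬ W <:+: (X ++ Y)} with hST
  set N := X.length with hN
  set n := Y.length with hn
  -- nonemptiness
  have habs : ∀ (Z : List α), (∃ W : List α, W.length = Z.length + 1 ∧ ¬ W <:+: Z) := by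
    intro Z
    refine ⟨List.replicate (Z.length + 1) a, by simp, fun h => ?_⟩
    have := h.length_le
    simp at this
  have hSXne : SX.Nonempty := ⟨N + 1, habs X⟩
  have hSTne : ST.Nonempty := ⟨N + n + 1, by have := habs (X ++ Y); simp only [List.length_append] at this; exact this⟩
  have hsub : ST ⊆ SX := by
    rintro k ⟨W, hWl, hW⟩
    exact ⟨W, hWl, fun h => hW (h.trans (List.prefix_append X Y).isInfix)⟩
  have hpart1 : sInf SX ≤ sInf ST := Nat.sInf_le (hsub (Nat.sInf_mem hSTne))
  refine ⟨hpart1, ?_⟩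
  -- convert real sInf of the real set into cast of the ℕ sInf
  have himg : ∀ (Z : List α), {k : ℝ | ∃ W : List α, (W.length : ℝ) = k ∧ ¬ W <:+: Z}
      = (fun k : ℕ => (k : ℝ)) '' {k : ℕ | ∃ W : List α, W.length = k ∧ ¬ W <:+: Z} := by
    intro Z; ext x
    constructor
    · rintro ⟨W, hW, hP⟩; exact ⟨W.length, ⟨W, rfl, hP⟩, hW⟩
    · rintro ⟨k, ⟨W, hWk, hP⟩, hx⟩; exact ⟨W, by simp only at hx; rw [hWk, hx], hP⟩
  have hcast : ∀ (S : Set ℕ), S.Nonempty →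
      sInf ((fun k : ℕ => (k : ℝ)) '' S) = ((sInf S : ℕ) : ℝ) := by
    intro S hS
    apply le_antisymm
    · exact csInf_le ⟨0, by rintro x ⟨k, _, rfl⟩; positivity⟩
        ⟨sInf S, Nat.sInf_mem hS, rfl⟩
    · apply le_csInf (hS.image _)
      rintro x ⟨k, hk, rfl⟩
      simp only
      exact_mod_cast Nat.sInf_le hk
  rw [show {k : ℝ | ∃ W : List α, (W.length : ℝ) = k ∧ ¬ W <:+: (X ++ Y)}
      = (fun k : ℕ => (k : ℝ)) '' ST from (himg (X ++ Y)).trans (by rw [hST]),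
    show {k : ℝ | ∃ W : List α, (W.length : ℝ) = k ∧ ¬ W <:+: X}
      = (fun k : ℕ => (k : ℝ)) '' SX from (himg X).trans (by rw [hSX]),
    hcast ST hSTne, hcast SX hSXne]
  set lam := sInf SX with hlamdef
  obtain ⟨W, hWlen, hWabs⟩ : ∃ W : List α, W.length = lam ∧ ¬ W <:+: X := Nat.sInf_mem hSXne
  have hlampos : 0 < lam := by
    rcases Nat.eq_zero_or_pos lam with h | h
    · exfalso
      rw [h] at hWlen
      exact hWabs ((List.eq_nil_of_length_eq_zero hWlen) ▸ List.nil_infix)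
    · exact h
  have hlamN : lam ≤ N + 1 := Nat.sInf_le (habs X)
  -- good extension
  obtain ⟨c, hc⟩ := exists_good_ext hσ a W
  set W' := W ++ [c] with hW'
  have hW'len : W'.length = lam + 1 := by simp [hW', hWlen]
  have hW'abs : ¬ W' <:+: X := fun h => hWabs (((List.prefix_append W [c]).isInfix).trans h)
  -- key counting lemma
  have key : ∀ j : ℕ, n / (lam / 2 + 1) + 2 ≤ σ ^ j → sInf ST ≤ lam + 1 + j := by
    intro j hcount
    by_contra hcon
    push_neg at hcon
    have hall : ∀ v : Fin j → α, (W' ++ List.ofFn v) <:+: (X ++ Y) := by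
      intro v
      by_contra hv
      have hmem : lam + 1 + j ∈ ST := by
        refine ⟨W' ++ List.ofFn v, ?_, hv⟩
        simp [hW'len]
      exact absurd (Nat.sInf_le hmem) (by omega)
    have hall' : ∀ v : Fin j → α, ∃ s t : List α,
        s ++ (W' ++ List.ofFn v) ++ t = X ++ Y := fun v => by
      obtain ⟨s, t, h⟩ := hall v; exact ⟨s, t, h⟩
    choose s t hst using hall'
    set q : (Fin j → α) → ℕ := fun v => (s v).length with hq
    -- lower bound on positions
    have hqlb : ∀ v, N + 1 ≤ q v + lam := by
      intro v
      have hqv : q v = (s v).length := rfl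
      by_contra hlb
      push_neg at hlb
      have h' : (s v) ++ W ++ ([c] ++ List.ofFn v ++ t v) = X ++ Y := by
        rw [← hst v]; simp [hW', List.append_assoc]
      exact hWabs (infix_left_of_occ X Y _ _ _ h' (by omega))
    -- upper bound on positions
    have hqub : ∀ v, q v + (lam + 1 + j) ≤ N + n := by
      intro v
      have hqv : q v = (s v).length := rfl
      have := congrArg List.length (hst v)
      simp [hW'len] at this
      omega
    -- separation
    have hsep : ∀ v1 v2 : Fin j → α, v1 ≠ v2 → lam / 2 + 1 ≤ q v1 - q v2 ∨
        lam / 2 + 1 ≤ q v2 - q v1 := by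
      intro v1 v2 hne
      have hqv1 : q v1 = (s v1).length := rfl
      have hqv2 : q v2 = (s v2).length := rfl
      by_contra hsep
      push_neg at hsep
      obtain ⟨hs1, hs2⟩ := hsep
      rcases lt_trichotomy (q v1) (q v2) with hlt | heq | hlt
      · -- occurrences of W' at q v1 and q v2
        set d := q v2 - q v1 with hd
        have h1 : (s v1) ++ W' ++ (List.ofFn v1 ++ t v1) = X ++ Y := by
          rw [← hst v1]; simp [List.append_assoc]
        have h2 : (s v2) ++ W' ++ (List.ofFn v2 ++ t v2) = X ++ Y := by
          rw [← hst v2]; simp [List.append_assoc]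
        have hper := per_of_two_occ a (X ++ Y) W' _ _ _ _ d h1 h2 (by omega)
        exact hc d (by omega) (by simp [hW', hWlen]; omega)
          (by simpa [hW'] using hper)
      · -- same position: equal words
        have := eq_of_same_occ _ _ _ _ _ _ _ (hst v1) (hst v2) heq (by simp)
        have := List.append_cancel_left this
        exact hne (List.ofFn_injective this)
      · set d := q v1 - q v2 with hd
        have h1 : (s v2) ++ W' ++ (List.ofFn v2 ++ t v2) = X ++ Y := by
          rw [← hst v2]; simp [List.append_assoc]
        have h2 : (s v1) ++ W' ++ (List.ofFn v1 ++ t v1) = X ++ Y := by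
          rw [← hst v1]; simp [List.append_assoc]
        have hper := per_of_two_occ a (X ++ Y) W' _ _ _ _ d h1 h2 (by omega)
        exact hc d (by omega) (by simp [hW', hWlen]; omega)
          (by simpa [hW'] using hper)
    -- the injection
    set B := n / (lam / 2 + 1) + 1 with hB
    have hF : ∀ v : Fin j → α, (q v - (N + 1 - lam)) / (lam / 2 + 1) < B := by
      intro v
      have h1 := hqub v
      have h2 := hqlb v
      have hle : q v - (N + 1 - lam) ≤ n := by omega
      have := Nat.div_le_div_right (c := lam / 2 + 1) hle
      omega
    set F : (Fin j → α) → Fin B := fun v => ⟨_, hF v⟩ with hFdef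
    have hFinj : Function.Injective F := by
      intro v1 v2 h
      by_contra hne
      have hsep' := hsep v1 v2 hne
      have hdiv : (q v1 - (N + 1 - lam)) / (lam / 2 + 1)
          = (q v2 - (N + 1 - lam)) / (lam / 2 + 1) := congrArg Fin.val h
      have h1 := hqlb v1
      have h2 := hqlb v2
      rcases hsep' with hs | hs
      · have : (q v2 - (N + 1 - lam)) + (lam / 2 + 1) ≤ q v1 - (N + 1 - lam) := by omega
        have hlt : (q v2 - (N + 1 - lam)) / (lam / 2 + 1)
            < (q v1 - (N + 1 - lam)) / (lam / 2 + 1) := by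
          have h3 : ((q v2 - (N + 1 - lam)) + (lam / 2 + 1)) / (lam / 2 + 1)
              = (q v2 - (N + 1 - lam)) / (lam / 2 + 1) + 1 := by
            rw [Nat.add_div_right _ (by omega)]
          have h4 := Nat.div_le_div_right (c := lam / 2 + 1) this
          omega
        omega
      · have : (q v1 - (N + 1 - lam)) + (lam / 2 + 1) ≤ q v2 - (N + 1 - lam) := by omega
        have hlt : (q v1 - (N + 1 - lam)) / (lam / 2 + 1)
            < (q v2 - (N + 1 - lam)) / (lam / 2 + 1) := by
          have h3 : ((q v1 - (N + 1 - lam)) + (lam / 2 + 1)) / (lam / 2 + 1)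
              = (q v1 - (N + 1 - lam)) / (lam / 2 + 1) + 1 := by
            rw [Nat.add_div_right _ (by omega)]
          have h4 := Nat.div_le_div_right (c := lam / 2 + 1) this
          omega
        omega
    have hcard := Fintype.card_le_of_injective F hFinj
    rw [Fintype.card_fun, Fintype.card_fin, Fintype.card_fin] at hcard
    rw [← hσdef] at hcard
    omega
  -- numeric case analysis
  rcases le_or_gt n (lam * σ ^ 6) with hcase | hcase
  · -- Case A : m ≤ lam + 10
    have hdiv : n / (lam / 2 + 1) ≤ 2 * σ ^ 6 := by
      have h1 : n ≤ (lam / 2 + 1) * (2 * σ ^ 6) := by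
        have : lam ≤ 2 * (lam / 2 + 1) := by omega
        calc n ≤ lam * σ ^ 6 := hcase
          _ ≤ (2 * (lam / 2 + 1)) * σ ^ 6 := by
              exact Nat.mul_le_mul_right _ this
          _ = (lam / 2 + 1) * (2 * σ ^ 6) := by ring
      calc n / (lam / 2 + 1) ≤ ((lam / 2 + 1) * (2 * σ ^ 6)) / (lam / 2 + 1) :=
            Nat.div_le_div_right h1
        _ = 2 * σ ^ 6 := Nat.mul_div_cancel_left _ (by omega)
    have hpow : 2 * σ ^ 6 + 2 ≤ σ ^ 9 := by
      have h8 : 8 ≤ σ ^ 3 := by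
        calc (8 : ℕ) = 2 ^ 3 := by norm_num
          _ ≤ σ ^ 3 := Nat.pow_le_pow_left hσ 3
      have h1 : 1 ≤ σ ^ 6 := Nat.one_le_pow _ _ (by omega)
      calc 2 * σ ^ 6 + 2 ≤ 8 * σ ^ 6 := by omega
        _ ≤ σ ^ 3 * σ ^ 6 := Nat.mul_le_mul_right _ h8
        _ = σ ^ 9 := by ring
    have hm : sInf ST ≤ lam + 10 := by
      have := key 9 (by omega)
      omega
    have hmr : ((sInf ST : ℕ) : ℝ) ≤ (lam : ℝ) + 10 := by exact_mod_cast hm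
    refine hmr.trans ?_
    have := le_max_left (10 : ℝ)
      (4 + Real.logb (σ : ℝ) ((n : ℝ) / (lam : ℝ)))
    linarith
  · -- Case B
    set tq := n / lam with htq
    have htqge : σ ^ 6 ≤ tq := by
      rw [htq, Nat.le_div_iff_mul_le hlampos]
      rw [mul_comm]; omega
    have htqpos : 0 < tq := by
      have : 1 ≤ σ ^ 6 := Nat.one_le_pow _ _ (by omega)
      omega
    set L := Nat.log σ tq with hL
    -- counting hypothesis for j = L + 3
    have hnlt : n < lam * (tq + 1) := by
      have h1 : lam * (n / lam) + n % lam = n := Nat.div_add_mod n lam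
      have h2 : lam * (tq + 1) = lam * (n / lam) + lam := by rw [htq]; ring
      have h3 : n % lam < lam := Nat.mod_lt _ hlampos
      omega
    have hdiv2 : n / (lam / 2 + 1) ≤ 2 * tq + 1 := by
      have h1 : n < (lam / 2 + 1) * (2 * (tq + 1)) := by
        have hl2 : lam ≤ 2 * (lam / 2 + 1) := by omega
        calc n < lam * (tq + 1) := hnlt
          _ ≤ (2 * (lam / 2 + 1)) * (tq + 1) := Nat.mul_le_mul_right _ hl2
          _ = (lam / 2 + 1) * (2 * (tq + 1)) := by ring
      have := Nat.div_lt_iff_lt_mul (show 0 < lam / 2 + 1 by omega)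
        (x := n) (y := 2 * (tq + 1))
      have h2 : n / (lam / 2 + 1) < 2 * (tq + 1) := by
        rw [this]
        calc n < (lam / 2 + 1) * (2 * (tq + 1)) := h1
          _ = 2 * (tq + 1) * (lam / 2 + 1) := by ring
      omega
    have hpowB : 2 * tq + 3 ≤ σ ^ (L + 3) := by
      have h1 : tq < σ ^ (L + 1) := Nat.lt_pow_succ_log_self (by omega) tq
      have h2 : σ ^ (L + 3) = σ ^ 2 * σ ^ (L + 1) := by ring
      have h3 : 4 ≤ σ ^ 2 := by
        calc (4 : ℕ) = 2 ^ 2 := by norm_num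
          _ ≤ σ ^ 2 := Nat.pow_le_pow_left hσ 2
      have h4 : 4 * (tq + 1) ≤ σ ^ 2 * σ ^ (L + 1) :=
        Nat.mul_le_mul h3 (by omega)
      omega
    have hm : sInf ST ≤ lam + 4 + L := by
      have := key (L + 3) (by omega)
      omega
    have hmr : ((sInf ST : ℕ) : ℝ) ≤ (lam : ℝ) + 4 + (L : ℝ) := by exact_mod_cast hm
    refine hmr.trans ?_
    have hσR : (1 : ℝ) < (σ : ℝ) := by exact_mod_cast (by omega : 1 < σ)
    have hlamR : (0 : ℝ) < (lam : ℝ) := by exact_mod_cast hlampos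
    have hnR : (0 : ℝ) < (n : ℝ) := by
      have : 0 < n := by
        have : 1 ≤ lam * σ ^ 6 := Nat.one_le_iff_ne_zero.mpr (by positivity)
        omega
      exact_mod_cast this
    -- L ≤ logb σ (n/lam)
    have hLlog : (L : ℝ) ≤ Real.logb (σ : ℝ) ((n : ℝ) / (lam : ℝ)) := by
      have hple : ((σ ^ L : ℕ) : ℝ) ≤ ((tq : ℕ) : ℝ) := by
        exact_mod_cast Nat.pow_log_le_self σ (by omega)
      have htle : ((tq : ℕ) : ℝ) ≤ (n : ℝ) / (lam : ℝ) := Nat.cast_div_le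
      have hle : ((σ : ℝ)) ^ L ≤ (n : ℝ) / (lam : ℝ) := by
        push_cast at hple
        linarith
      have hpos : (0 : ℝ) < (σ : ℝ) ^ L := by positivity
      have := (Real.logb_le_logb hσR hpos (lt_of_lt_of_le hpos hle)).mpr hle
      rwa [Real.logb_pow, Real.logb_self_eq_one hσR, mul_one] at this
    have hmax : (4 : ℝ) + (L : ℝ) ≤
        max 10 (4 + Real.logb (σ : ℝ) ((n : ℝ) / (lam : ℝ))) := by
      have := le_max_right (10 : ℝ) (4 + Real.logb (σ : ℝ) ((n : ℝ) / (lam : ℝ)))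
      linarith
    linarith
end

section
/- Let Σ be a finite alphabet of size σ ≥ 2, let X and Y be strings over Σ, let m = ℓ(X·Y) be the length of a shortest absent word of X·Y, and let λ = ℓ(X) be the length of a shortest absent word of X. If τ is a positive integer with τ ≥ 16 and |Y| ≤ m·τ, then, as real numbers, m − λ ≤ 10 + 2·log_σ(τ), where log_σ denotes the real logarithm to base σ (Lean: Real.logb σ). -/
set_option maxHeartbeats 1000000

/-- Counting lemma: a finite set of naturals inside an interval of length `n`,
with pairwise gaps at least `g`, has at most `n/g + 1` elements. -/
lemma saw_gap_count (T : Finset ℕ) (a n g : ℕ) (hg : 0 < g)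
    (hmem : ∀ x ∈ T, a ≤ x ∧ x ≤ a + n)
    (hgap : ∀ x ∈ T, ∀ y ∈ T, x < y → x + g ≤ y) :
    T.card ≤ n / g + 1 := by
  have key : ∀ x ∈ T, ∀ y ∈ T, x < y → (x - a) / g + 1 ≤ (y - a) / g := by
    intro x hx y hy hxy
    have h2 := hgap x hx y hy hxy
    have hax := (hmem x hx).1
    calc (x - a)/g + 1 = ((x - a) + g)/g := (Nat.add_div_right _ hg).symm
      _ ≤ (y - a)/g := Nat.div_le_div_right (by omega)
  have hcard := Finset.card_le_card_of_injOn (s := T) (t := Finset.range (n/g + 1)) (fun x => (x - a)/g) ?_ ?_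
  · simpa using hcard
  · intro x hx
    simp only [Finset.mem_range]
    have := hmem x hx
    exact Finset.mem_coe.2 (Finset.mem_range.2 (Nat.lt_succ_of_le (Nat.div_le_div_right (show x - a ≤ n by omega))))
  · intro x hx y hy hxy
    simp only at hxy
    rcases Nat.lt_trichotomy x y with h | h | h
    · have := key x hx y hy h; omega
    · exact h
    · have := key y hy x hx h; omega

lemma saw_nine_sq (D : ℕ) : 9 * D^2 ≤ 2^(D+4) := by
  induction D with
  | zero => norm_num
  | succ n ih =>
    rcases Nat.lt_or_ge n 3 with h | h
    · interval_cases n <;> norm_num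
    · have h1 : 9 * (n+1)^2 ≤ 2 * (9 * n^2) := by nlinarith
      calc 9*(n+1)^2 ≤ 2*(9*n^2) := h1
        _ ≤ 2 * 2^(n+4) := by omega
        _ = 2^(n+1+4) := by ring

lemma saw_sInf_cast (S : Set ℕ) (hS : S.Nonempty) :
    sInf {x : ℝ | ∃ n ∈ S, (n:ℝ) = x} = ((sInf S : ℕ) : ℝ) := by
  have hmem : ((sInf S : ℕ) : ℝ) ∈ {x : ℝ | ∃ n ∈ S, (n:ℝ) = x} := by
    exact ⟨sInf S, Nat.sInf_mem hS, rfl⟩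
  apply le_antisymm
  · exact csInf_le ⟨0, fun x hx => by obtain ⟨n, hn, rfl⟩ := hx; positivity⟩ hmem
  · apply le_csInf ⟨_, hmem⟩
    rintro x ⟨n, hn, rfl⟩
    exact_mod_cast Nat.sInf_le hn

/-- Over a finite alphabet of size `σ ≥ 2`, let `m = ℓ(X ++ Y)` and
`λ = ℓ(X)` be the lengths of shortest absent words. If `τ ≥ 16` is a positive integer and
`|Y| ≤ m·τ`, then, as reals, `m − λ ≤ 10 + 2·log_σ(τ)`. -/
theorem shortest_absent_word_reverse_extension {α : Type*} [Fintype α]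
    (hσ : 2 ≤ Fintype.card α) (X Y : List α) (τ : ℕ) (hτ : 16 ≤ τ)
    (hY : Y.length ≤ sInf {k | ∃ W : List α, W.length = k ∧ ¬ W <:+: (X ++ Y)} * τ) :
    (sInf {k | ∃ W : List α, W.length = k ∧ ¬ W <:+: (X ++ Y)} : ℝ) -
      (sInf {k | ∃ W : List α, W.length = k ∧ ¬ W <:+: X} : ℝ) ≤
      10 + 2 * Real.logb (Fintype.card α) τ := by
  classical
  obtain ⟨a0⟩ : Nonempty α := Fintype.card_pos_iff.mp (by omega)
  have hne : ∀ T : List α, {k : ℕ | ∃ W : List α, W.length = k ∧ ¬ W <:+: T}.Nonempty := by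
    intro T
    refine ⟨T.length + 1, List.replicate (T.length+1) a0, by simp, fun h => ?_⟩
    have := h.length_le
    simp at this
  have conv : ∀ T : List α, sInf {k : ℝ | ∃ W : List α, (W.length:ℝ) = k ∧ ¬ W <:+: T}
      = ((sInf {k : ℕ | ∃ W : List α, W.length = k ∧ ¬ W <:+: T} : ℕ) : ℝ) := by
    intro T
    rw [show {k : ℝ | ∃ W : List α, (W.length:ℝ) = k ∧ ¬ W <:+: T}
        = {x : ℝ | ∃ n ∈ {k : ℕ | ∃ W : List α, W.length = k ∧ ¬ W <:+: T}, (n:ℝ) = x} by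
      ext x
      simp only [Set.mem_setOf_eq]
      constructor
      · rintro ⟨W, hWl, habs⟩
        exact ⟨W.length, ⟨W, rfl, habs⟩, hWl⟩
      · rintro ⟨n, ⟨W, hlen, habs⟩, rfl⟩
        exact ⟨W, by rw [hlen], habs⟩]
    exact saw_sInf_cast _ (hne T)
  rw [conv (X ++ Y), conv X]
  set m := sInf {k | ∃ W : List α, W.length = k ∧ ¬ W <:+: (X ++ Y)} with hmdef
  set l := sInf {k | ∃ W : List α, W.length = k ∧ ¬ W <:+: X} with hldef
  obtain ⟨Wm, hWm_len, hWm_abs⟩ := Nat.sInf_mem (hne (X ++ Y))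
  obtain ⟨W, hW_len, hW_abs⟩ := Nat.sInf_mem (hne X)
  have hlm : l ≤ m :=
    Nat.sInf_le ⟨Wm, hWm_len, fun h => hWm_abs (h.trans (X.prefix_append Y).isInfix)⟩
  have hl1 : 1 ≤ l := by
    rcases Nat.eq_zero_or_pos l with h0 | h
    · exfalso
      have hnil : W = [] := List.length_eq_zero_iff.mp (by omega)
      rw [hnil] at hW_abs
      exact hW_abs List.nil_infix
    · exact h
  have hocc_all : ∀ U : List α, U.length < m → U <:+: (X ++ Y) := by
    intro U hU
    by_contra hcon
    have := Nat.sInf_le (s := {k | ∃ W : List α, W.length = k ∧ ¬ W <:+: (X ++ Y)}) ⟨U, rfl, hcon⟩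
    omega
  have hσR : (1:ℝ) < (Fintype.card α : ℝ) := by exact_mod_cast by omega
  have hlogb0 : 0 ≤ Real.logb (Fintype.card α) τ :=
    Real.logb_nonneg hσR (by exact_mod_cast by omega)
  by_cases hDsmall : m ≤ l + 10
  · have h1 : (m:ℝ) ≤ (l:ℝ) + 10 := by exact_mod_cast hDsmall
    linarith
  push_neg at hDsmall
  set D := m - l with hDdef
  have hD11 : 11 ≤ D := by omega
  have hmld : m = l + D := by omega
  -- choose a letter c such that W ++ [c] has no period ≤ l/2
  have key_c : ∃ c : α, ∀ q : ℕ, 0 < q → 2 * q ≤ l →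
      (W ++ [c]).drop q ≠ (W ++ [c]).take (l + 1 - q) := by
    by_contra hcon
    push_neg at hcon
    have ext : ∀ (c : α) (q : ℕ), 0 < q → 2*q ≤ l →
        (W ++ [c]).drop q = (W ++ [c]).take (l + 1 - q) →
        (∀ i, i + q < l → W[i]? = W[i+q]?) ∧ W[l-q]? = some c := by
      intro c q hq hql heq
      have tr : ∀ j, j < l → (W ++ [c])[j]? = W[j]? := by
        intro j hj
        rw [List.getElem?_append, if_pos (show j < W.length by omega)]
      have point : ∀ i, i + q ≤ l → (W ++ [c])[i+q]? = (W ++ [c])[i]? := by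
        intro i hi
        have h0 := congrArg (fun L => L[i]?) heq
        simp only [List.getElem?_drop, List.getElem?_take] at h0
        rw [if_pos (by omega)] at h0
        rw [← h0]
        congr 1
        omega
      have hcl : (W ++ [c])[l]? = some c := by
        rw [List.getElem?_append_right (by omega)]
        simp [hW_len, ← hldef]
      constructor
      · intro i hi
        have hp := point i (by omega)
        rw [tr i (by omega), tr (i+q) (by omega)] at hp
        exact hp.symm
      · have hp := point (l - q) (by omega)
        rw [show l - q + q = l by omega, hcl, tr (l-q) (by omega)] at hp
        exact hp.symm
    obtain ⟨b, hb⟩ := Fintype.exists_ne_of_one_lt_card (by omega) a0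
    obtain ⟨qa, hqa1, hqa2, hqa3⟩ := hcon a0
    obtain ⟨qb, hqb1, hqb2, hqb3⟩ := hcon b
    obtain ⟨pera, hca⟩ := ext a0 qa hqa1 hqa2 hqa3
    obtain ⟨perb, hcb⟩ := ext b qb hqb1 hqb2 hqb3
    rcases eq_or_ne qa qb with hq | hq
    · rw [hq] at hca
      exact hb (Option.some_inj.mp (hca.symm.trans hcb)).symm
    · have cross : W[l - qa]? = W[l - qb]? := by
        have h1 : W[l - qa - qb]? = W[l - qa]? := by
          have := perb (l - qa - qb) (by omega)
          rwa [show l - qa - qb + qb = l - qa by omega] at this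
        have h2 : W[l - qa - qb]? = W[l - qb]? := by
          have := pera (l - qa - qb) (by omega)
          rwa [show l - qa - qb + qa = l - qb by omega] at this
        rw [← h1, h2]
      rw [hca, hcb] at cross
      exact hb (Option.some_inj.mp cross).symm
  obtain ⟨c, hc⟩ := key_c
  set V := W ++ [c] with hVdef
  have hVlen : V.length = l + 1 := by simp [hVdef, hW_len, ← hldef]
  have hVabs : ¬ V <:+: X := fun h => hW_abs ((W.prefix_append [c]).isInfix.trans h)
  -- any occurrence of V in X ++ Y must end strictly beyond X
  have occ_lb : ∀ A B : List α, X ++ Y = A ++ V ++ B → X.length < A.length + (l + 1) := by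
    intro A B hAB
    by_contra hle
    push_neg at hle
    apply hVabs
    have h1 : ((X ++ Y).drop A.length).take (l+1) = V := by
      rw [hAB, List.append_assoc, List.drop_left, List.take_left' hVlen]
    have h2 : (X ++ Y).drop A.length = X.drop A.length ++ Y :=
      List.drop_append_of_le_length (by omega)
    rw [h2, List.take_append_of_le_length (by simp; omega)] at h1
    rw [← h1]
    exact (List.take_prefix (l+1) (X.drop A.length)).isInfix.trans
      (List.drop_suffix A.length X).isInfix
  -- two occurrences of V are far apart
  have occ_sep : ∀ A B A' B' : List α, X ++ Y = A ++ V ++ B → X ++ Y = A' ++ V ++ B' →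
      A.length < A'.length → l < 2 * (A'.length - A.length) := by
    intro A B A' B' h1 h2 hlt
    by_contra hle
    push_neg at hle
    set δ := A'.length - A.length with hδ
    have hδ1 : 0 < δ := by omega
    apply hc δ hδ1 hle
    have e1 : ((X ++ Y).drop A.length).take (l+1) = V := by
      rw [h1, List.append_assoc, List.drop_left, List.take_left' hVlen]
    have e2 : ((X ++ Y).drop A'.length).take (l+1) = V := by
      rw [h2, List.append_assoc, List.drop_left, List.take_left' hVlen]
    calc V.drop δ = (((X ++ Y).drop A.length).take (l+1)).drop δ := by rw [e1]
      _ = (((X ++ Y).drop A.length).drop δ).take (l+1-δ) := by rw [List.drop_take]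
      _ = ((X ++ Y).drop A'.length).take (l+1-δ) := by
            rw [List.drop_drop]
            congr 2
            omega
      _ = (((X ++ Y).drop A'.length).take (l+1)).take (l+1-δ) := by
            rw [List.take_take]
            congr 1
            omega
      _ = V.take (l+1-δ) := by rw [e2]
  set h := (D - 2) / 2 with hhdef
  have hwordlen : ∀ uv : (Fin h → α) × (Fin h → α),
      (List.ofFn uv.1 ++ V ++ List.ofFn uv.2).length < m := by
    intro uv
    simp [hVlen]
    omega
  have hocc2 : ∀ uv : (Fin h → α) × (Fin h → α), ∃ p : ℕ,
      (∃ A B : List α, X ++ Y = A ++ V ++ B ∧ A.length = p) ∧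
      (((X ++ Y).take p).drop (p - h) = List.ofFn uv.1) ∧
      (((X ++ Y).drop (p + (l+1))).take h = List.ofFn uv.2) ∧
      h ≤ p ∧ p + (l + 1) ≤ X.length + Y.length := by
    intro uv
    obtain ⟨A, B, hAB⟩ := hocc_all _ (hwordlen uv)
    refine ⟨A.length + h, ⟨A ++ List.ofFn uv.1, List.ofFn uv.2 ++ B, ?_, by simp⟩, ?_, ?_, by omega, ?_⟩
    · rw [← hAB]
      simp [List.append_assoc]
    · have ht : (X ++ Y).take (A.length + h) = A ++ List.ofFn uv.1 := by
        rw [← hAB,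
          show A ++ (List.ofFn uv.1 ++ V ++ List.ofFn uv.2) ++ B
            = (A ++ List.ofFn uv.1) ++ (V ++ List.ofFn uv.2 ++ B) by simp [List.append_assoc],
          List.take_left' (by simp)]
      rw [ht, show A.length + h - h = A.length by omega, List.drop_left]
    · have hd : (X ++ Y).drop (A.length + h + (l+1)) = List.ofFn uv.2 ++ B := by
        rw [← hAB,
          show A ++ (List.ofFn uv.1 ++ V ++ List.ofFn uv.2) ++ B
            = ((A ++ List.ofFn uv.1) ++ V) ++ (List.ofFn uv.2 ++ B) by simp [List.append_assoc],
          List.drop_left' (by simp [hVlen]; omega)]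
      rw [show A.length + h + (l+1) = A.length + h + (l+1) from rfl] at hd
      rw [hd, List.take_left' (by simp)]
    · have hlen := congrArg List.length hAB
      simp [hVlen] at hlen
      omega
  choose F hF1 hF2 hF3 hF4 hF5 using hocc2
  have Finj : Function.Injective F := by
    intro uv uv' heq
    have e1 := hF2 uv
    have e1' := hF2 uv'
    have e2 := hF3 uv
    have e2' := hF3 uv'
    rw [heq] at e1 e2
    exact Prod.ext (List.ofFn_injective (e1.symm.trans e1')) (List.ofFn_injective (e2.symm.trans e2'))
  set g : ℕ := l/2 + 1 with hgdef
  set T : Finset ℕ := Finset.image F Finset.univ with hT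
  have hTcard : T.card = Fintype.card α ^ h * Fintype.card α ^ h := by
    rw [hT, Finset.card_image_of_injective _ Finj]
    simp
  have hTbound : T.card ≤ Y.length / g + 1 := by
    apply saw_gap_count T (X.length - l) Y.length g (by omega)
    · intro x hx
      rw [hT] at hx
      simp only [Finset.mem_image, Finset.mem_univ, true_and] at hx
      obtain ⟨uv, rfl⟩ := hx
      obtain ⟨A, B, hAB, hlenA⟩ := hF1 uv
      have hlb := occ_lb A B hAB
      have hub := hF5 uv
      omega
    · intro x hx y hy hxy
      rw [hT] at hx hy
      simp only [Finset.mem_image, Finset.mem_univ, true_and] at hx hy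
      obtain ⟨uv, rfl⟩ := hx
      obtain ⟨uv', rfl⟩ := hy
      obtain ⟨A, B, hAB, hlenA⟩ := hF1 uv
      obtain ⟨A', B', hAB', hlenA'⟩ := hF1 uv'
      have := occ_sep A B A' B' hAB hAB' (by omega)
      omega
  have hpow : Fintype.card α ^ (D - 3) ≤ 3 * τ * D := by
    have c1 : Fintype.card α ^ (D-3) ≤ Fintype.card α ^ h * Fintype.card α ^ h := by
      rw [← pow_add]
      exact Nat.pow_le_pow_right (by omega) (by omega)
    have hm2 : m ≤ 2*D*(l/2+1) := by
      have hk : l ≤ 2*(l/2)+1 := by omega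
      nlinarith [hD11, Nat.zero_le (l/2)]
    have hYle : Y.length ≤ (2*D*τ) * g := by
      calc Y.length ≤ m * τ := hY
        _ ≤ (2*D*(l/2+1)) * τ := Nat.mul_le_mul_right τ hm2
        _ = (2*D*τ) * g := by rw [hgdef]; ring
    have c2 : Y.length / g + 1 ≤ 2*D*τ + 1 := by
      have hdd : Y.length / g ≤ (2*D*τ) * g / g := Nat.div_le_div_right hYle
      rw [Nat.mul_div_cancel _ (show 0 < g by omega)] at hdd
      omega
    calc Fintype.card α ^ (D-3) ≤ Fintype.card α ^ h * Fintype.card α ^ h := c1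
      _ = T.card := hTcard.symm
      _ ≤ Y.length / g + 1 := hTbound
      _ ≤ 2*D*τ + 1 := c2
      _ ≤ 3*τ*D := by nlinarith [hτ, hD11]
  -- real arithmetic
  have hcard2 : (2:ℝ) ≤ (Fintype.card α : ℝ) := by exact_mod_cast hσ
  have hlogσ : 0 < Real.log (Fintype.card α) := Real.log_pos (by linarith)
  have hDR : (11:ℝ) ≤ (D:ℝ) := by exact_mod_cast hD11
  have hτR : (16:ℝ) ≤ (τ:ℝ) := by exact_mod_cast hτ
  have hpowR : ((Fintype.card α:ℝ)) ^ (D-3 : ℕ) ≤ 3 * (τ:ℝ) * (D:ℝ) := by exact_mod_cast hpow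
  have h1 : ((D:ℝ) - 3) * Real.log (Fintype.card α)
      ≤ Real.log 3 + Real.log τ + Real.log D := by
    have lgle := Real.log_le_log (by positivity) hpowR
    rw [Real.log_pow, Real.log_mul (by positivity) (by positivity),
      Real.log_mul (by norm_num) (by positivity),
      Nat.cast_sub (show 3 ≤ D by omega)] at lgle
    push_cast at lgle
    linarith
  have h2 : 2 * (Real.log 3 + Real.log D) ≤ ((D:ℝ) + 4) * Real.log (Fintype.card α) := by
    have hreal : (9:ℝ) * (D:ℝ)^2 ≤ 2^(D+4) := by exact_mod_cast saw_nine_sq D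
    have lg := Real.log_le_log (by positivity) hreal
    rw [Real.log_pow] at lg
    have e : Real.log (9 * (D:ℝ)^2) = 2*Real.log 3 + 2*Real.log D := by
      rw [Real.log_mul (by norm_num) (by positivity),
        show (9:ℝ) = 3^2 by norm_num, Real.log_pow, Real.log_pow]
      push_cast
      ring
    rw [e] at lg
    have hlog2 : Real.log 2 ≤ Real.log (Fintype.card α) := Real.log_le_log (by norm_num) hcard2
    have hmul : ((D:ℝ)+4) * Real.log 2 ≤ ((D:ℝ)+4) * Real.log (Fintype.card α) :=
      mul_le_mul_of_nonneg_left hlog2 (by linarith)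
    push_cast at lg
    linarith
  have h3 : ((D:ℝ) - 10) * Real.log (Fintype.card α) ≤ 2 * Real.log τ := by linarith
  have h4 : (D:ℝ) ≤ 10 + 2 * Real.logb (Fintype.card α) τ := by
    have hdiv : (D:ℝ) - 10 ≤ 2 * Real.log τ / Real.log (Fintype.card α) := by
      rw [le_div_iff₀ hlogσ]
      linarith
    rw [mul_div_assoc] at hdiv
    rw [Real.logb]
    linarith
  have hfin : (m:ℝ) - (l:ℝ) = (D:ℝ) := by
    rw [hDdef, Nat.cast_sub hlm]
  linarith
end
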